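/- Let (X_t)_{t∈ℕ} be an integrable real-valued process adapted to a filtration (F_t), X₀ ≤ 0, b > 0, and T = inf{t : X_t ≥ b}. Suppose there exist a ≤ 0, c ∈ (0, b), ε < 0 such that for all t: (1) E[X_{t+1} − X_t | F_t]·1{X_t ≥ a ∧ t < T} ≤ ε·1{X_t ≥ a ∧ t < T}; (2) |X_t − X_{t+1}|·1{X_t ≥ a} < c·1{X_t ≥ a ∧ t < T} + 1{X_t < a ∨ t ≥ T}; (3) X_{t+1}·1{X_t < a ∧ t < T} ≤ 0. Then for all t ∈ ℕ, Pr[T ≤ t] ≤ t²·exp(−b|ε|/(2c²)). -/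

import Mathlib

set_option maxHeartbeats 2000000


open MeasureTheory Set
open scoped ENNReal

private lemma exp_quad_aux {x : ℝ} (hx : |x| ≤ 1) : Real.exp x ≤ 1 + x + x ^ 2 := by
  have h := Real.exp_bound hx (n := 2) (by norm_num)
  have hs : (∑ i ∈ Finset.range 2, x ^ i / i.factorial) = 1 + x := by
    simp [Finset.sum_range_succ]
  rw [hs] at h
  have h2 : Real.exp x - (1 + x) ≤ |x| ^ 2 * ((2 : ℕ).succ / ((2 : ℕ).factorial * 2)) :=
    le_trans (le_abs_self _) h
  have hfac : ((2 : ℕ).succ / ((2 : ℕ).factorial * 2) : ℝ) = 3 / 4 := by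
    norm_num [Nat.factorial]
  rw [hfac, sq_abs] at h2
  nlinarith [sq_nonneg x]

private lemma aux_int_mul_le {Ω : Type*} {m0 : MeasurableSpace Ω} {μ : Measure Ω}
    [IsProbabilityMeasure μ] {m : MeasurableSpace Ω} (hm : m ≤ m0)
    {Z Y W : Ω → ℝ} (hZ : Integrable Z μ) (hY : Integrable Y μ)
    (hle : μ[Z|m] ≤ᵐ[μ] Y) (hW : StronglyMeasurable[m] W)
    (hWnn : ∀ ω, 0 ≤ W ω) {C : ℝ} (hWb : ∀ ω, ‖W ω‖ ≤ C) :
    ∫ ω, W ω * Z ω ∂μ ≤ ∫ ω, W ω * Y ω ∂μ := by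
  haveI : SigmaFinite (μ.trim hm) := inferInstance
  have hWZ : Integrable (fun ω => W ω * Z ω) μ :=
    hZ.bdd_mul (hW.mono hm).aestronglyMeasurable (Filter.Eventually.of_forall hWb)
  have h1 : ∫ ω, W ω * Z ω ∂μ = ∫ ω, (W ω) * (μ[Z|m]) ω ∂μ := by
    have := condExp_mul_of_stronglyMeasurable_left hW (by exact hWZ) hZ
    rw [← integral_condExp hm (f := fun ω => W ω * Z ω)]
    exact integral_congr_ae (by filter_upwards [this] with ω h using h)
  rw [h1]
  refine integral_mono_ae
    (integrable_condExp.bdd_mul (hW.mono hm).aestronglyMeasurable (Filter.Eventually.of_forall hWb))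
    (hY.bdd_mul (hW.mono hm).aestronglyMeasurable (Filter.Eventually.of_forall hWb)) ?_
  filter_upwards [hle] with ω h
  exact mul_le_mul_of_nonneg_left h (hWnn ω)

/-- Negative drift theorem: under a negative drift condition, bounded step sizes, and a
no-jump-from-below condition, the probability of hitting `[b, ∞)` within `t` steps is at
most `t² · exp(−b|ε|/(2c²))`. -/
theorem stmt_14 {Ω : Type*} {m0 : MeasurableSpace Ω} (μ : Measure Ω)
    [IsProbabilityMeasure μ] (ℱ : Filtration ℕ m0) (X : ℕ → Ω → ℝ)
    (hadapted : Adapted ℱ X) (hint : ∀ t, Integrable (X t) μ)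
    (b : ℝ) (hb : 0 < b)
    (T : Ω → ℝ≥0∞) (hT : ∀ ω, T ω = ⨅ t ∈ {t : ℕ | b ≤ X t ω}, (t : ℝ≥0∞))
    (hX0 : ∀ ω, X 0 ω ≤ 0)
    (a c ε : ℝ) (ha : a ≤ 0) (hc0 : 0 < c) (hcb : c < b) (hε : ε < 0)
    (hdrift : ∀ t : ℕ,
      μ[fun ω => (X (t + 1) ω - X t ω) *
          indicator {ω | a ≤ X t ω ∧ (t : ℝ≥0∞) < T ω} (fun _ => (1 : ℝ)) ω | ℱ t]
        ≤ᵐ[μ] fun ω =>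
          ε * indicator {ω | a ≤ X t ω ∧ (t : ℝ≥0∞) < T ω} (fun _ => (1 : ℝ)) ω)
    (hstep : ∀ t : ℕ, ∀ ω,
      |X t ω - X (t + 1) ω| * indicator {ω | a ≤ X t ω} (fun _ => (1 : ℝ)) ω <
        c * indicator {ω | a ≤ X t ω ∧ (t : ℝ≥0∞) < T ω} (fun _ => (1 : ℝ)) ω +
          indicator {ω | X t ω < a ∨ T ω ≤ (t : ℝ≥0∞)} (fun _ => (1 : ℝ)) ω)
    (hjump : ∀ t : ℕ, ∀ ω,
      X (t + 1) ω * indicator {ω | X t ω < a ∧ (t : ℝ≥0∞) < T ω} (fun _ => (1 : ℝ)) ω ≤ 0) :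
    ∀ t : ℕ, (μ {ω | T ω ≤ (t : ℝ≥0∞)}).toReal ≤
      (t : ℝ) ^ 2 * Real.exp (-(b * |ε|) / (2 * c ^ 2)) := by
  classical
  intro t
  have hc2 : (0 : ℝ) < c ^ 2 := by positivity
  have hXm : ∀ u, Measurable (X u) := fun u => ((hadapted u).mono (ℱ.le u) le_rfl)
  -- characterization of the hitting time
  have hTle : ∀ (u : ℕ) ω, T ω ≤ (u : ℝ≥0∞) ↔ ∃ v ≤ u, b ≤ X v ω := by
    intro u ω
    rw [hT]
    constructor
    · intro h
      by_contra hcon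
      push_neg at hcon
      have h2 : ((u : ℝ≥0∞) + 1) ≤ ⨅ t ∈ {t : ℕ | b ≤ X t ω}, (t : ℝ≥0∞) := by
        refine le_iInf₂ fun v hv => ?_
        have hv' : u < v := by
          by_contra h'
          push_neg at h'
          exact absurd hv (not_le.mpr (hcon v h'))
        have : u + 1 ≤ v := hv'
        exact_mod_cast this
      have h3 : ((u : ℝ≥0∞)) + 1 ≤ u := le_trans h2 h
      have h4 : (u : ℝ≥0∞) < (u : ℝ≥0∞) + 1 :=
        ENNReal.lt_add_right (ENNReal.natCast_ne_top u) one_ne_zero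
      exact absurd h3 (not_le.mpr h4)
    · rintro ⟨v, hvu, hbv⟩
      exact le_trans (iInf₂_le v hbv) (by exact_mod_cast hvu)
  have hTgt : ∀ (u : ℕ) ω, (u : ℝ≥0∞) < T ω ↔ ∀ v ≤ u, X v ω < b := by
    intro u ω
    rw [← not_le, hTle]
    push_neg
    simp [not_le]
  -- pointwise consequences of the hypotheses
  have hjump' : ∀ (u : ℕ) ω, X u ω < a → (u : ℝ≥0∞) < T ω → X (u + 1) ω ≤ 0 := by
    intro u ω h1 h2
    have h := hjump u ω
    rwa [Set.indicator_of_mem (show ω ∈ {ω | X u ω < a ∧ (u : ℝ≥0∞) < T ω} from ⟨h1, h2⟩),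
      mul_one] at h
  have habs : ∀ (u : ℕ) ω, a ≤ X u ω → (u : ℝ≥0∞) < T ω → |X u ω - X (u + 1) ω| < c := by
    intro u ω h1 h2
    have h := hstep u ω
    rw [Set.indicator_of_mem (show ω ∈ {ω | a ≤ X u ω} from h1),
      Set.indicator_of_mem (show ω ∈ {ω | a ≤ X u ω ∧ (u : ℝ≥0∞) < T ω} from ⟨h1, h2⟩),
      Set.indicator_of_notMem
        (show ω ∉ {ω | X u ω < a ∨ T ω ≤ (u : ℝ≥0∞)} by
          rintro (h' | h')
          · exact absurd h1 (not_le.mpr h')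
          · exact absurd h2 (not_lt.mpr h'))] at h
    simpa using h
  -- the decomposition into "fresh start" intervals
  have hdec : ∀ ω, T ω ≤ (t : ℝ≥0∞) → ∃ s r, s ≤ r ∧ r < t ∧
      (X s ω ≤ 0 ∧ ∀ v, s ≤ v → v ≤ r → (a ≤ X v ω ∧ (v : ℝ≥0∞) < T ω)) ∧
      b ≤ X (r + 1) ω := by
    intro ω ht
    obtain ⟨m, hmt, hbm⟩ := (hTle t ω).mp ht
    have hP : ∃ v, b ≤ X v ω := ⟨m, hbm⟩
    set m₀ := Nat.find hP with hm₀
    have hm₀m : m₀ ≤ m := Nat.find_min' hP hbm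
    have hbm₀ : b ≤ X m₀ ω := Nat.find_spec hP
    have hm₀pos : 0 < m₀ := by
      rcases Nat.eq_zero_or_pos m₀ with h | h
      · rw [h] at hbm₀; exact absurd hbm₀ (not_le.mpr (lt_of_le_of_lt (hX0 ω) hb))
      · exact h
    set r := m₀ - 1 with hr
    have hr1 : r + 1 = m₀ := Nat.succ_pred_eq_of_pos hm₀pos
    have hlt : ∀ w ≤ r, X w ω < b := by
      intro w hw
      have : w < m₀ := by omega
      exact not_le.mp (Nat.find_min hP this)
    have hrT : ∀ v ≤ r, (v : ℝ≥0∞) < T ω :=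
      fun v hv => (hTgt v ω).mpr fun w hw => hlt w (le_trans hw hv)
    have hrt : r < t := by omega
    have hbr : b ≤ X (r + 1) ω := hr1 ▸ hbm₀
    by_cases hex : ∃ u, u ≤ r ∧ X u ω < a
    · obtain ⟨u0, hu0r, hu0⟩ := hex
      set u := Nat.findGreatest (fun u => X u ω < a) r with hu
      have huP : X u ω < a := Nat.findGreatest_spec (P := fun u => X u ω < a) hu0r hu0
      have hur : u ≤ r := Nat.findGreatest_le r
      have hune : u ≠ r := by
        intro h
        have := hjump' r ω (h ▸ huP) (hrT r le_rfl)
        exact absurd hbr (not_le.mpr (lt_of_le_of_lt this hb))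
      refine ⟨u + 1, r, by omega, hrt, ⟨hjump' u ω huP (hrT u hur), ?_⟩, hbr⟩
      intro v hv1 hv2
      refine ⟨?_, hrT v hv2⟩
      by_contra hva
      push_neg at hva
      exact Nat.findGreatest_is_greatest (P := fun u => X u ω < a) (by omega) hv2 hva
    · push_neg at hex
      exact ⟨0, r, Nat.zero_le r, hrt, ⟨hX0 ω, fun v _ hv2 => ⟨hex v hv2, hrT v hv2⟩⟩, hbr⟩
  -- measurability of the relevant sets
  have hAms : ∀ u : ℕ, MeasurableSet[ℱ u] {ω | a ≤ X u ω ∧ (u : ℝ≥0∞) < T ω} := by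
    intro u
    have heq : {ω | a ≤ X u ω ∧ (u : ℝ≥0∞) < T ω} =
        {ω | a ≤ X u ω} ∩ ⋂ v ∈ Finset.range (u + 1), {ω | X v ω < b} := by
      ext ω
      simp only [Set.mem_setOf_eq, Set.mem_inter_iff, Set.mem_iInter, Finset.mem_range,
        Nat.lt_succ_iff, hTgt]
    rw [heq]
    refine MeasurableSet.inter
      (measurableSet_le measurable_const (hadapted u))
      (MeasurableSet.biInter (Set.to_countable _) fun v hv => ?_)
    have hvu : v ≤ u := Nat.lt_succ_iff.mp (Finset.mem_range.mp hv)
    exact measurableSet_lt ((hadapted v).mono (ℱ.mono hvu) le_rfl) measurable_const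
  set G : ℕ → ℕ → Set Ω := fun s r =>
    {ω | X s ω ≤ 0 ∧ ∀ v, s ≤ v → v ≤ r → (a ≤ X v ω ∧ (v : ℝ≥0∞) < T ω)} with hG
  have hGms : ∀ s r : ℕ, s ≤ r → MeasurableSet[ℱ r] (G s r) := by
    intro s r hsr
    have heq : G s r = {ω | X s ω ≤ 0} ∩
        ⋂ v ∈ Finset.Icc s r, {ω | a ≤ X v ω ∧ (v : ℝ≥0∞) < T ω} := by
      ext ω
      simp only [hG, Set.mem_setOf_eq, Set.mem_inter_iff, Set.mem_iInter, Finset.mem_Icc,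
        and_imp]
    rw [heq]
    refine MeasurableSet.inter
      (measurableSet_le ((hadapted s).mono (ℱ.mono hsr) le_rfl) measurable_const)
      (MeasurableSet.biInter (Set.to_countable _) fun v hv => ?_)
    have hvr : v ≤ r := (Finset.mem_Icc.mp hv).2
    exact (ℱ.mono hvr) _ (hAms v)
  have hGA : ∀ s r : ℕ, s ≤ r → G s r ⊆ {ω | a ≤ X r ω ∧ (r : ℝ≥0∞) < T ω} :=
    fun s r hsr ω hω => hω.2 r hsr le_rfl
  have hbdd_int : ∀ (f : Ω → ℝ) (C : ℝ), AEStronglyMeasurable f μ →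
      (∀ ω, ‖f ω‖ ≤ C) → Integrable f μ :=
    fun f C h1 h2 => (integrable_const C).mono' h1 (Filter.Eventually.of_forall h2)
  -- the indicator of A u, and the increment function
  set Zf : ℕ → Ω → ℝ := fun u ω => (X (u + 1) ω - X u ω) *
    indicator {ω | a ≤ X u ω ∧ (u : ℝ≥0∞) < T ω} (fun _ => (1 : ℝ)) ω with hZf
  have hZmeas : ∀ u, Measurable (Zf u) := by
    intro u
    exact ((hXm (u + 1)).sub (hXm u)).mul
      (measurable_const.indicator (ℱ.le u _ (hAms u)))
  have hZbd : ∀ u ω, ‖Zf u ω‖ ≤ c := by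
    intro u ω
    by_cases hω : ω ∈ {ω | a ≤ X u ω ∧ (u : ℝ≥0∞) < T ω}
    · rw [hZf]
      simp only [Set.indicator_of_mem hω, mul_one]
      rw [Real.norm_eq_abs, abs_sub_comm]
      exact (habs u ω hω.1 hω.2).le
    · have hz : Zf u ω = 0 := by
        rw [hZf]
        simp [Set.indicator_of_notMem hω]
      rw [hz]
      simp [hc0.le]
  have hZint : ∀ u, Integrable (Zf u) μ :=
    fun u => hbdd_int _ c (hZmeas u).aestronglyMeasurable (hZbd u)
  have hXrb : ∀ (u : ℕ) ω, (u : ℝ≥0∞) < T ω → X u ω < b :=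
    fun u ω h => (hTgt u ω).mp h u le_rfl
  have hX1b : ∀ (u : ℕ) ω, a ≤ X u ω → (u : ℝ≥0∞) < T ω → X (u + 1) ω < b + c := by
    intro u ω h1 h2
    have h3 := abs_lt.mp (habs u ω h1 h2)
    have h4 := hXrb u ω h2
    linarith [h3.1]
  have hYint : ∀ u : ℕ, Integrable (fun ω =>
      ε * indicator {ω | a ≤ X u ω ∧ (u : ℝ≥0∞) < T ω} (fun _ => (1 : ℝ)) ω) μ := by
    intro u
    refine hbdd_int _ |ε| ((measurable_const.indicator
      (ℱ.le u _ (hAms u))).const_mul ε).aestronglyMeasurable fun ω => ?_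
    by_cases hω : ω ∈ {ω | a ≤ X u ω ∧ (u : ℝ≥0∞) < T ω}
    · simp [Set.indicator_of_mem hω]
    · simp [Set.indicator_of_notMem hω]
  by_cases hce : -ε ≤ c
  · -- main case : |ε| ≤ c
    set L : ℝ := -ε / c ^ 2 with hLdef
    have hL0 : 0 < L := div_pos (neg_pos.mpr hε) hc2
    have hLc : L * c ≤ 1 := by
      rw [hLdef, div_mul_eq_mul_div, div_le_one hc2]
      nlinarith
    have hLc2 : L * c ^ 2 = -ε := by
      rw [hLdef]
      field_simp
    -- the exponential-supermartingale step
    have hstepkey : ∀ s r : ℕ, s ≤ r →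
        (∫ ω in G s r, Real.exp (L * X (r + 1) ω) ∂μ) ≤
          ∫ ω in G s r, Real.exp (L * X r ω) ∂μ := by
      intro s r hsr
      have hGmr : MeasurableSet[ℱ r] (G s r) := hGms s r hsr
      have hGm : MeasurableSet (G s r) := ℱ.le r _ hGmr
      set W : Ω → ℝ := (G s r).indicator (fun ω => Real.exp (L * X r ω)) with hWdef
      have hWsm : StronglyMeasurable[ℱ r] W :=
        (((hadapted r).const_mul L).exp.stronglyMeasurable).indicator hGmr
      have hWnn : ∀ ω, 0 ≤ W ω :=
        fun ω => Set.indicator_nonneg (fun ω _ => (Real.exp_pos _).le) ω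
      have hWb : ∀ ω, ‖W ω‖ ≤ Real.exp (L * b) := by
        intro ω
        rw [hWdef, Real.norm_eq_abs]
        by_cases hω : ω ∈ G s r
        · rw [Set.indicator_of_mem hω, abs_of_pos (Real.exp_pos _), Real.exp_le_exp]
          have := hXrb r ω (hGA s r hsr hω).2
          nlinarith [hL0.le]
        · rw [Set.indicator_of_notMem hω]
          simp [(Real.exp_pos (L * b)).le]
      have hWint : Integrable W μ :=
        hbdd_int _ (Real.exp (L * b)) ((hWsm.mono (ℱ.le r)).aestronglyMeasurable) hWb
      have hWZint : Integrable (fun ω => W ω * Zf r ω) μ :=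
        (hZint r).bdd_mul ((hWsm.mono (ℱ.le r)).aestronglyMeasurable) (Filter.Eventually.of_forall hWb)
      have hind_int : Integrable ((G s r).indicator fun ω => Real.exp (L * X (r + 1) ω)) μ := by
        refine hbdd_int _ (Real.exp (L * (b + c)))
          (((hXm (r + 1)).const_mul L).exp.indicator hGm).aestronglyMeasurable fun ω => ?_
        by_cases hω : ω ∈ G s r
        · rw [Set.indicator_of_mem hω, Real.norm_eq_abs, abs_of_pos (Real.exp_pos _),
            Real.exp_le_exp]
          have hA := hGA s r hsr hω
          have := hX1b r ω hA.1 hA.2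
          nlinarith [hL0.le]
        · rw [Set.indicator_of_notMem hω]
          simp [(Real.exp_pos (L * (b + c))).le]
      have hpt : ∀ ω, (G s r).indicator (fun ω => Real.exp (L * X (r + 1) ω)) ω ≤
          (1 + L ^ 2 * c ^ 2) * W ω + L * (W ω * Zf r ω) := by
        intro ω
        by_cases hω : ω ∈ G s r
        · have hA : ω ∈ {ω | a ≤ X r ω ∧ (r : ℝ≥0∞) < T ω} := hGA s r hsr hω
          rw [Set.indicator_of_mem hω, hWdef, Set.indicator_of_mem hω]
          have hZval : Zf r ω = X (r + 1) ω - X r ω := by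
            rw [hZf]
            simp [Set.indicator_of_mem hA]
          rw [hZval]
          set d := X (r + 1) ω - X r ω with hd
          have hdc : |d| < c := by
            rw [hd, abs_sub_comm]
            exact habs r ω hA.1 hA.2
          have h1 : |L * d| ≤ 1 := by
            rw [abs_mul, abs_of_pos hL0]
            calc L * |d| ≤ L * c := by nlinarith
            _ ≤ 1 := hLc
          have h2 : Real.exp (L * d) ≤ 1 + L ^ 2 * c ^ 2 + L * d := by
            have h3 := exp_quad_aux h1
            have hsq : (L * d) ^ 2 ≤ L ^ 2 * c ^ 2 := by
              have h4 := abs_lt.mp hdc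
              have h5 : 0 < (c - d) * (c + d) :=
                mul_pos (by linarith [h4.2]) (by linarith [h4.1])
              nlinarith [h5, sq_nonneg L]
            linarith
          have hexp : Real.exp (L * X (r + 1) ω) =
              Real.exp (L * d) * Real.exp (L * X r ω) := by
            rw [← Real.exp_add, hd]
            ring_nf
          rw [hexp]
          have hEpos : (0 : ℝ) < Real.exp (L * X r ω) := Real.exp_pos _
          nlinarith [mul_le_mul_of_nonneg_right h2 hEpos.le]
        · rw [Set.indicator_of_notMem hω, hWdef, Set.indicator_of_notMem hω]
          simp
      have hchain1 : (∫ ω in G s r, Real.exp (L * X (r + 1) ω) ∂μ) ≤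
          (1 + L ^ 2 * c ^ 2) * (∫ ω, W ω ∂μ) + L * ∫ ω, W ω * Zf r ω ∂μ := by
        rw [← integral_indicator hGm]
        calc (∫ ω, (G s r).indicator (fun ω => Real.exp (L * X (r + 1) ω)) ω ∂μ)
            ≤ ∫ ω, ((1 + L ^ 2 * c ^ 2) * W ω + L * (W ω * Zf r ω)) ∂μ :=
              integral_mono hind_int
                ((hWint.const_mul _).add (hWZint.const_mul L)) hpt
          _ = (1 + L ^ 2 * c ^ 2) * (∫ ω, W ω ∂μ) + L * ∫ ω, W ω * Zf r ω ∂μ := by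
              rw [integral_add (hWint.const_mul _) (hWZint.const_mul L),
                integral_const_mul, integral_const_mul]
      have hchain2 : L * (∫ ω, W ω * Zf r ω ∂μ) ≤ L * ∫ ω, W ω *
          (ε * indicator {ω | a ≤ X r ω ∧ (r : ℝ≥0∞) < T ω} (fun _ => (1 : ℝ)) ω) ∂μ := by
        refine mul_le_mul_of_nonneg_left ?_ hL0.le
        exact aux_int_mul_le (ℱ.le r) (hZint r) (hYint r) (hdrift r) hWsm hWnn hWb
      have hchain3 : (1 + L ^ 2 * c ^ 2) * (∫ ω, W ω ∂μ) + L * (∫ ω, W ω *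
          (ε * indicator {ω | a ≤ X r ω ∧ (r : ℝ≥0∞) < T ω} (fun _ => (1 : ℝ)) ω) ∂μ) =
          ∫ ω in G s r, Real.exp (L * X r ω) ∂μ := by
        have hYint' : Integrable (fun ω => W ω *
            (ε * indicator {ω | a ≤ X r ω ∧ (r : ℝ≥0∞) < T ω} (fun _ => (1 : ℝ)) ω)) μ :=
          (hYint r).bdd_mul ((hWsm.mono (ℱ.le r)).aestronglyMeasurable) (Filter.Eventually.of_forall hWb)
        rw [← integral_const_mul, ← integral_const_mul,
          ← integral_add (hWint.const_mul _) (hYint'.const_mul L)]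
        have heqpt : ∀ ω, (1 + L ^ 2 * c ^ 2) * W ω + L * (W ω *
            (ε * indicator {ω | a ≤ X r ω ∧ (r : ℝ≥0∞) < T ω} (fun _ => (1 : ℝ)) ω)) =
            (G s r).indicator (fun ω => Real.exp (L * X r ω)) ω := by
          intro ω
          by_cases hω : ω ∈ G s r
          · have hA := hGA s r hsr hω
            rw [Set.indicator_of_mem hA, hWdef, Set.indicator_of_mem hω]
            linear_combination (L * Real.exp (L * X r ω)) * hLc2
          · have hw0 : W ω = 0 := by
              rw [hWdef]
              exact Set.indicator_of_notMem hω _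
            rw [Set.indicator_of_notMem hω, hw0]
            ring
        rw [integral_congr_ae (Filter.Eventually.of_forall heqpt), integral_indicator hGm]
      calc (∫ ω in G s r, Real.exp (L * X (r + 1) ω) ∂μ)
          ≤ (1 + L ^ 2 * c ^ 2) * (∫ ω, W ω ∂μ) + L * ∫ ω, W ω * Zf r ω ∂μ := hchain1
        _ ≤ (1 + L ^ 2 * c ^ 2) * (∫ ω, W ω ∂μ) + L * ∫ ω, W ω *
            (ε * indicator {ω | a ≤ X r ω ∧ (r : ℝ≥0∞) < T ω} (fun _ => (1 : ℝ)) ω) ∂μ := by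
            linarith [hchain2]
        _ = ∫ ω in G s r, Real.exp (L * X r ω) ∂μ := hchain3
    -- integrability on G s r
    have hIntOn : ∀ s r : ℕ, s ≤ r → IntegrableOn (fun ω => Real.exp (L * X (r + 1) ω))
        (G s r) μ := by
      intro s r hsr
      have hGm : MeasurableSet (G s r) := ℱ.le r _ (hGms s r hsr)
      refine (integrable_indicator_iff hGm).mp ?_
      refine hbdd_int _ (Real.exp (L * (b + c)))
        (((hXm (r + 1)).const_mul L).exp.indicator hGm).aestronglyMeasurable fun ω => ?_
      by_cases hω : ω ∈ G s r
      · rw [Set.indicator_of_mem hω, Real.norm_eq_abs, abs_of_pos (Real.exp_pos _),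
          Real.exp_le_exp]
        have hA := hGA s r hsr hω
        have := hX1b r ω hA.1 hA.2
        nlinarith [hL0.le]
      · rw [Set.indicator_of_notMem hω]
        simp [(Real.exp_pos (L * (b + c))).le]
    -- the key supermartingale bound
    have hbase : ∀ u : ℕ, (∫ ω in G u u, Real.exp (L * X u ω) ∂μ) ≤ 1 := by
      intro u
      have hGm : MeasurableSet (G u u) := ℱ.le u _ (hGms u u le_rfl)
      have hone : ∀ ω ∈ G u u, Real.exp (L * X u ω) ≤ 1 := by
        intro ω hω
        rw [Real.exp_le_one_iff]
        have : X u ω ≤ 0 := hω.1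
        nlinarith [hL0.le]
      have hio : IntegrableOn (fun ω => Real.exp (L * X u ω)) (G u u) μ := by
        refine (integrable_indicator_iff hGm).mp ?_
        refine hbdd_int _ 1
          (((hXm u).const_mul L).exp.indicator hGm).aestronglyMeasurable fun ω => ?_
        by_cases hω : ω ∈ G u u
        · rw [Set.indicator_of_mem hω, Real.norm_eq_abs, abs_of_pos (Real.exp_pos _)]
          exact hone ω hω
        · rw [Set.indicator_of_notMem hω]
          simp
      have h1 : (∫ ω in G u u, Real.exp (L * X u ω) ∂μ) ≤ ∫ _ω in G u u, (1 : ℝ) ∂μ :=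
        setIntegral_mono_on hio (integrableOn_const (measure_ne_top μ _))
          hGm hone
      have h2 : (∫ _ω in G u u, (1 : ℝ) ∂μ) ≤ 1 := by
        rw [setIntegral_const, smul_eq_mul, mul_one]
        exact ENNReal.toReal_mono ENNReal.one_ne_top prob_le_one
      linarith
    have hkey : ∀ r : ℕ, ∀ s ≤ r, (∫ ω in G s r, Real.exp (L * X r ω) ∂μ) ≤ 1 := by
      intro r
      induction r with
      | zero =>
        intro s hs
        obtain rfl : s = 0 := Nat.le_zero.mp hs
        exact hbase 0
      | succ r IH =>
        intro s hs
        rcases eq_or_lt_of_le hs with h | h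
        · rw [h]
          exact hbase (r + 1)
        · have hsr : s ≤ r := Nat.lt_succ_iff.mp h
          have hsub : G s (r + 1) ⊆ G s r := fun ω hω =>
            ⟨hω.1, fun v h1 h2 => hω.2 v h1 (h2.trans (Nat.le_succ r))⟩
          calc (∫ ω in G s (r + 1), Real.exp (L * X (r + 1) ω) ∂μ)
              ≤ ∫ ω in G s r, Real.exp (L * X (r + 1) ω) ∂μ :=
                setIntegral_mono_set (hIntOn s r hsr)
                  (Filter.Eventually.of_forall fun ω => (Real.exp_pos _).le)
                  (HasSubset.Subset.eventuallyLE hsub)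
            _ ≤ ∫ ω in G s r, Real.exp (L * X r ω) ∂μ := hstepkey s r hsr
            _ ≤ 1 := IH s hsr
    -- measure of each event
    have hE : ∀ s r : ℕ, s ≤ r →
        μ (G s r ∩ {ω | b ≤ X (r + 1) ω}) ≤ ENNReal.ofReal (Real.exp (-(L * b))) := by
      intro s r hsr
      have hGm : MeasurableSet (G s r) := ℱ.le r _ (hGms s r hsr)
      have hEm : MeasurableSet (G s r ∩ {ω | b ≤ X (r + 1) ω}) :=
        hGm.inter (measurableSet_le measurable_const (hXm (r + 1)))
      have h1 : Real.exp (L * b) * (μ (G s r ∩ {ω | b ≤ X (r + 1) ω})).toReal ≤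
          ∫ ω in G s r ∩ {ω | b ≤ X (r + 1) ω}, Real.exp (L * X (r + 1) ω) ∂μ := by
        refine setIntegral_ge_of_const_le_real hEm (measure_ne_top μ _) (fun ω hω => ?_)
          ((hIntOn s r hsr).mono_set Set.inter_subset_left)
        rw [Real.exp_le_exp]
        have : b ≤ X (r + 1) ω := hω.2
        nlinarith [hL0.le]
      have h2 : (∫ ω in G s r ∩ {ω | b ≤ X (r + 1) ω}, Real.exp (L * X (r + 1) ω) ∂μ) ≤
          ∫ ω in G s r, Real.exp (L * X (r + 1) ω) ∂μ :=
        setIntegral_mono_set (hIntOn s r hsr)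
          (Filter.Eventually.of_forall fun ω => (Real.exp_pos _).le)
          (HasSubset.Subset.eventuallyLE Set.inter_subset_left)
      have h3 : (∫ ω in G s r, Real.exp (L * X (r + 1) ω) ∂μ) ≤ 1 :=
        (hstepkey s r hsr).trans (hkey r s hsr)
      have hEp : (0 : ℝ) < Real.exp (L * b) := Real.exp_pos _
      have h4 : (μ (G s r ∩ {ω | b ≤ X (r + 1) ω})).toReal ≤ Real.exp (-(L * b)) := by
        set m := (μ (G s r ∩ {ω | b ≤ X (r + 1) ω})).toReal with hm
        have h5 : Real.exp (L * b) * m ≤ 1 := le_trans h1 (h2.trans h3)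
        rw [Real.exp_neg]
        nlinarith [h5, mul_inv_cancel₀ hEp.ne', ENNReal.toReal_nonneg
          (a := μ (G s r ∩ {ω | b ≤ X (r + 1) ω})), (Real.exp_pos (L * b)).le,
          inv_nonneg.mpr (Real.exp_pos (L * b)).le]
      calc μ (G s r ∩ {ω | b ≤ X (r + 1) ω})
          = ENNReal.ofReal ((μ (G s r ∩ {ω | b ≤ X (r + 1) ω})).toReal) :=
            (ENNReal.ofReal_toReal (measure_ne_top μ _)).symm
        _ ≤ ENNReal.ofReal (Real.exp (-(L * b))) := ENNReal.ofReal_le_ofReal h4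
    -- union bound
    have hsub : {ω | T ω ≤ (t : ℝ≥0∞)} ⊆ ⋃ r ∈ Finset.range t, ⋃ s ∈ Finset.range (r + 1),
        (G s r ∩ {ω | b ≤ X (r + 1) ω}) := by
      intro ω hω
      obtain ⟨s, r, hsr, hrt, hG', hb'⟩ := hdec ω hω
      exact Set.mem_biUnion (Finset.mem_range.mpr hrt)
        (Set.mem_biUnion (Finset.mem_range.mpr (by omega)) ⟨hG', hb'⟩)
    have hμle : μ {ω | T ω ≤ (t : ℝ≥0∞)} ≤
        (t : ℝ≥0∞) * ((t : ℝ≥0∞) * ENNReal.ofReal (Real.exp (-(L * b)))) := by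
      calc μ {ω | T ω ≤ (t : ℝ≥0∞)}
          ≤ μ (⋃ r ∈ Finset.range t, ⋃ s ∈ Finset.range (r + 1),
              (G s r ∩ {ω | b ≤ X (r + 1) ω})) := measure_mono hsub
        _ ≤ ∑ r ∈ Finset.range t, μ (⋃ s ∈ Finset.range (r + 1),
              (G s r ∩ {ω | b ≤ X (r + 1) ω})) := measure_biUnion_finset_le _ _
        _ ≤ ∑ r ∈ Finset.range t, ∑ s ∈ Finset.range (r + 1),
              μ (G s r ∩ {ω | b ≤ X (r + 1) ω}) :=
            Finset.sum_le_sum fun r _ => measure_biUnion_finset_le _ _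
        _ ≤ ∑ r ∈ Finset.range t, ∑ _s ∈ Finset.range (r + 1),
              ENNReal.ofReal (Real.exp (-(L * b))) :=
            Finset.sum_le_sum fun r _ => Finset.sum_le_sum fun s hs =>
              hE s r (Nat.lt_succ_iff.mp (Finset.mem_range.mp hs))
        _ = ∑ r ∈ Finset.range t, ((r + 1 : ℕ) : ℝ≥0∞) *
              ENNReal.ofReal (Real.exp (-(L * b))) := by
            simp [Finset.sum_const, nsmul_eq_mul]
        _ ≤ ∑ _r ∈ Finset.range t, (t : ℝ≥0∞) * ENNReal.ofReal (Real.exp (-(L * b))) := by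
            refine Finset.sum_le_sum fun r hr => ?_
            have : ((r + 1 : ℕ) : ℝ≥0∞) ≤ (t : ℝ≥0∞) := by
              exact_mod_cast Nat.succ_le_of_lt (Finset.mem_range.mp hr)
            exact mul_le_mul_left this _
        _ = (t : ℝ≥0∞) * ((t : ℝ≥0∞) * ENNReal.ofReal (Real.exp (-(L * b)))) := by
            rw [Finset.sum_const, Finset.card_range, nsmul_eq_mul]
    have hne : (t : ℝ≥0∞) * ((t : ℝ≥0∞) * ENNReal.ofReal (Real.exp (-(L * b)))) ≠ ⊤ :=
      ENNReal.mul_ne_top (ENNReal.natCast_ne_top t)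
        (ENNReal.mul_ne_top (ENNReal.natCast_ne_top t) ENNReal.ofReal_ne_top)
    have hfin : ((t : ℝ≥0∞) * ((t : ℝ≥0∞) * ENNReal.ofReal (Real.exp (-(L * b))))).toReal =
        (t : ℝ) * ((t : ℝ) * Real.exp (-(L * b))) := by
      rw [ENNReal.toReal_mul, ENNReal.toReal_mul,
        ENNReal.toReal_ofReal (Real.exp_pos _).le]
      simp
    have hexple : Real.exp (-(L * b)) ≤ Real.exp (-(b * |ε|) / (2 * c ^ 2)) := by
      rw [Real.exp_le_exp, abs_of_neg hε, hLdef, div_mul_eq_mul_div, neg_div,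
        neg_le_neg_iff]
      rw [div_le_div_iff₀ (by positivity) hc2]
      nlinarith [mul_pos hb (neg_pos.mpr hε), hc2.le]
    calc (μ {ω | T ω ≤ (t : ℝ≥0∞)}).toReal
        ≤ ((t : ℝ≥0∞) * ((t : ℝ≥0∞) * ENNReal.ofReal (Real.exp (-(L * b))))).toReal :=
          ENNReal.toReal_mono hne hμle
      _ = (t : ℝ) * ((t : ℝ) * Real.exp (-(L * b))) := hfin
      _ ≤ (t : ℝ) ^ 2 * Real.exp (-(b * |ε|) / (2 * c ^ 2)) := by
          have hnn : (0 : ℝ) ≤ (t : ℝ) * (t : ℝ) := by positivity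
          calc (t : ℝ) * ((t : ℝ) * Real.exp (-(L * b)))
              = ((t : ℝ) * (t : ℝ)) * Real.exp (-(L * b)) := by ring
            _ ≤ ((t : ℝ) * (t : ℝ)) * Real.exp (-(b * |ε|) / (2 * c ^ 2)) :=
                mul_le_mul_of_nonneg_left hexple hnn
            _ = (t : ℝ) ^ 2 * Real.exp (-(b * |ε|) / (2 * c ^ 2)) := by ring
  · -- degenerate case : c < |ε| forces all events to be null
    push_neg at hce
    have hAnull : ∀ u : ℕ, μ {ω | a ≤ X u ω ∧ (u : ℝ≥0∞) < T ω} = 0 := by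
      intro u
      have hAm : MeasurableSet {ω | a ≤ X u ω ∧ (u : ℝ≥0∞) < T ω} := ℱ.le u _ (hAms u)
      have haux := aux_int_mul_le (ℱ.le u) (hZint u) (hYint u) (hdrift u)
        (W := fun _ => (1 : ℝ)) (stronglyMeasurable_const)
        (fun _ => zero_le_one) (C := 1) (fun _ => by simp)
      simp only [one_mul] at haux
      have hupper : (∫ ω, ε * indicator {ω | a ≤ X u ω ∧ (u : ℝ≥0∞) < T ω}
          (fun _ => (1 : ℝ)) ω ∂μ) =
          ε * (μ {ω | a ≤ X u ω ∧ (u : ℝ≥0∞) < T ω}).toReal := by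
        rw [integral_const_mul, integral_indicator_const _ hAm, smul_eq_mul, mul_one, measureReal_def]
      have hlowpt : ∀ ω, (-c) * indicator {ω | a ≤ X u ω ∧ (u : ℝ≥0∞) < T ω}
          (fun _ => (1 : ℝ)) ω ≤ Zf u ω := by
        intro ω
        by_cases hω : ω ∈ {ω | a ≤ X u ω ∧ (u : ℝ≥0∞) < T ω}
        · rw [Set.indicator_of_mem hω, mul_one, hZf]
          simp only [Set.indicator_of_mem hω, mul_one]
          have h4 := abs_lt.mp (habs u ω hω.1 hω.2)
          linarith [h4.2]
        · have hz : Zf u ω = 0 := by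
            rw [hZf]
            simp [Set.indicator_of_notMem hω]
          rw [Set.indicator_of_notMem hω, hz, mul_zero]
      have hlowint : Integrable (fun ω => (-c) * indicator
          {ω | a ≤ X u ω ∧ (u : ℝ≥0∞) < T ω} (fun _ => (1 : ℝ)) ω) μ :=
        (hbdd_int _ 1 (measurable_const.indicator hAm).aestronglyMeasurable fun ω => by
          by_cases hω : ω ∈ {ω | a ≤ X u ω ∧ (u : ℝ≥0∞) < T ω}
          · simp [Set.indicator_of_mem hω]
          · simp [Set.indicator_of_notMem hω]).const_mul (-c)
      have hlow : (-c) * (μ {ω | a ≤ X u ω ∧ (u : ℝ≥0∞) < T ω}).toReal ≤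
          ∫ ω, Zf u ω ∂μ := by
        have := integral_mono hlowint (hZint u) hlowpt
        rwa [integral_const_mul, integral_indicator_const _ hAm, smul_eq_mul, mul_one]
          at this
      have hm0' : (μ {ω | a ≤ X u ω ∧ (u : ℝ≥0∞) < T ω}).toReal = 0 := by
        nlinarith [ENNReal.toReal_nonneg
          (a := μ {ω | a ≤ X u ω ∧ (u : ℝ≥0∞) < T ω}), hlow, le_trans haux
          (le_of_eq hupper), hce]
      rcases (ENNReal.toReal_eq_zero_iff _).mp hm0' with h | h
      · exact h
      · exact absurd h (measure_ne_top μ _)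
    have hsub : {ω | T ω ≤ (t : ℝ≥0∞)} ⊆
        ⋃ r ∈ Finset.range t, {ω | a ≤ X r ω ∧ (r : ℝ≥0∞) < T ω} := by
      intro ω hω
      obtain ⟨s, r, hsr, hrt, ⟨_, hall⟩, _⟩ := hdec ω hω
      exact Set.mem_biUnion (Finset.mem_range.mpr hrt) (hall r hsr le_rfl)
    have h0 : μ {ω | T ω ≤ (t : ℝ≥0∞)} = 0 := by
      refine le_antisymm (le_trans (measure_mono hsub) ?_) (by simp)
      refine le_trans (measure_biUnion_finset_le _ _) ?_
      simp [hAnull]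
    rw [h0]
    positivity
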